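/- Invariance of the electrical torque along the steady-state flow. Define the electrical torque τ_e(θ, i) = ½ iᵀ(L(θ)·𝒿 + 𝒿ᵀ·L(θ))·i for θ ∈ ℝ, i ∈ ℝ⁵. Then for all θ ∈ ℝ, i ∈ ℝ⁵, and ω0 ∈ ℝ, the directional derivative of τ_e along the steady-state flow vanishes: (∂τ_e/∂θ)(θ, i)·ω0 + (∇_i τ_e)(θ, i)ᵀ·(ω0·𝒿·i) = 0. -/

import Mathlib

noncomputable section
open Matrix

/-- Vectors in ℝ². -/
abbrev V2 : Type := Fin 2 → ℝ
/-- 2×2 real matrices. -/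
abbrev M2 : Type := Matrix (Fin 2) (Fin 2) ℝ

/-- The 90° rotation matrix `j`. -/
def j2 : M2 := !![0, -1; 1, 0]

/-- The rotation matrix `R(θ)`. -/
def Rot (θ : ℝ) : M2 := !![Real.cos θ, -Real.sin θ; Real.sin θ, Real.cos θ]

/-- The unit vector `r(θ) = (cos θ, sin θ)`. -/
def rvec (θ : ℝ) : V2 := ![Real.cos θ, Real.sin θ]

/-- The Euclidean norm on ℝ². -/
def enorm2 (w : V2) : ℝ := Real.sqrt (w 0 ^ 2 + w 1 ^ 2)
/-- Index type for the 5 machine windings: 2 stator + 3 rotor (f, d, q). -/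
abbrev I5 : Type := Fin 2 ⊕ Fin 3
/-- Vectors in ℝ⁵ (machine currents/voltages). -/
abbrev V5 : Type := I5 → ℝ

/-- The 5×5 matrix 𝒿 = diag(j, 0₃ₓ₃). -/
def jj : Matrix I5 I5 ℝ := Matrix.fromBlocks j2 0 0 0

/-- Parameters of a synchronous machine. -/
structure Machine where
  /-- stator winding resistance -/
  rs : ℝ
  /-- excitation winding resistance -/
  rf : ℝ
  /-- d-axis damper winding resistance -/
  rd : ℝ
  /-- q-axis damper winding resistance -/
  rq : ℝ
  /-- stator winding inductance -/
  ls : ℝ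
  /-- rotor saliency -/
  lsa : ℝ
  /-- excitation winding inductance -/
  lf : ℝ
  /-- d-axis damper winding inductance -/
  ld : ℝ
  /-- q-axis damper winding inductance -/
  lq : ℝ
  /-- mutual inductance of excitation and damper winding -/
  lfd : ℝ
  /-- stator–excitation mutual inductance -/
  lsf : ℝ
  /-- stator–d-damper mutual inductance -/
  lsd : ℝ
  /-- stator–q-damper mutual inductance -/
  lsq : ℝ
  /-- rotor inertia -/
  m : ℝ
  /-- rotor damping -/
  d : ℝ
  rs_pos : 0 < rs
  rf_pos : 0 < rf
  rd_pos : 0 < rd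
  rq_pos : 0 < rq
  ls_pos : 0 < ls
  lsa_nonneg : 0 ≤ lsa
  lf_pos : 0 < lf
  ld_pos : 0 < ld
  lq_pos : 0 < lq
  lfd_pos : 0 < lfd
  lsf_pos : 0 < lsf
  lsd_pos : 0 < lsd
  lsq_pos : 0 < lsq
  m_pos : 0 < m
  d_pos : 0 < d

namespace Machine

/-- Stator inductance matrix L_s(θ). -/
def Ls (mc : Machine) (θ : ℝ) : M2 :=
  mc.ls • (1 : M2) + Rot (2 * θ) * !![mc.lsa, 0; 0, -mc.lsa]

/-- Mutual inductance matrix L_m(θ). -/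
def Lm (mc : Machine) (θ : ℝ) : Matrix (Fin 2) (Fin 3) ℝ :=
  Rot θ * !![mc.lsf, mc.lsd, 0; 0, 0, -mc.lsq]

/-- Rotor inductance matrix L_r. -/
def Lr (mc : Machine) : Matrix (Fin 3) (Fin 3) ℝ :=
  !![mc.lf, mc.lfd, 0; mc.lfd, mc.ld, 0; 0, 0, mc.lq]

/-- The 5×5 machine inductance matrix L(θ). -/
def Lmat (mc : Machine) (θ : ℝ) : Matrix I5 I5 ℝ :=
  Matrix.fromBlocks (mc.Ls θ) (mc.Lm θ) (mc.Lm θ)ᵀ mc.Lr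

/-- The 5×5 machine resistance matrix R = diag(r_s I₂, r_f, r_d, r_q). -/
def Rmat (mc : Machine) : Matrix I5 I5 ℝ :=
  Matrix.fromBlocks (mc.rs • (1 : M2)) 0 0 (Matrix.diagonal ![mc.rf, mc.rd, mc.rq])

/-- Electrical torque τ_e = ½ iᵀ(L(θ)𝒿 + 𝒿ᵀL(θ))i. -/
def torque (mc : Machine) (θ : ℝ) (i : V5) : ℝ :=
  (1 / 2) * (i ⬝ᵥ ((mc.Lmat θ * jj + jjᵀ * mc.Lmat θ) *ᵥ i))

/-- Induced voltage v_ind = ω(L(θ)𝒿ᵀ + 𝒿L(θ))i. -/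
def vind (mc : Machine) (ω θ : ℝ) (i : V5) : V5 :=
  ω • ((mc.Lmat θ * jjᵀ + jj * mc.Lmat θ) *ᵥ i)

/-- Stator impedance Z_s(θ) = r_s I₂ + ω₀ j L_s(θ). -/
def Zs (mc : Machine) (ω0 θ : ℝ) : M2 :=
  mc.rs • (1 : M2) + ω0 • (j2 * mc.Ls θ)

/-- The open-circuit stator voltage error ν(θ) = v − Z_s(θ) i_s. -/
def nu (mc : Machine) (ω0 θ : ℝ) (v is : V2) : V2 :=
  v - mc.Zs ω0 θ *ᵥ is

end Machine

/-- The directional derivative of the electrical torque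
τ_e(θ,i) = ½ iᵀ(L(θ)𝒿 + 𝒿ᵀL(θ))i along the steady-state flow
(θ̇, i̇) = (ω₀, ω₀ 𝒿 i) vanishes. -/
private lemma torque_eq (mc : Machine) (θ : ℝ) (i : V5) :
    mc.torque θ i =
      mc.lsa * (i (Sum.inl 0) ^ 2 - i (Sum.inl 1) ^ 2) * Real.sin (2 * θ)
      - 2 * mc.lsa * i (Sum.inl 0) * i (Sum.inl 1) * Real.cos (2 * θ)
      + ((mc.lsf * i (Sum.inr 0) + mc.lsd * i (Sum.inr 1)) * i (Sum.inl 0)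
          - mc.lsq * i (Sum.inr 2) * i (Sum.inl 1)) * Real.sin θ
      - ((mc.lsf * i (Sum.inr 0) + mc.lsd * i (Sum.inr 1)) * i (Sum.inl 1)
          + mc.lsq * i (Sum.inr 2) * i (Sum.inl 0)) * Real.cos θ := by
  simp [Machine.torque, Machine.Lmat, Machine.Ls, Machine.Lm, Machine.Lr, jj, j2, Rot,
    Matrix.mulVec, dotProduct, Fintype.sum_sum_type, Fin.sum_univ_succ,
    Matrix.fromBlocks, Matrix.mul_apply, Matrix.transpose_apply, Matrix.one_apply,
    Matrix.vecHead, Matrix.vecTail, Fin.sum_univ_two]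
  ring

private lemma jj_mulVec_inl0 (i : V5) : (jj *ᵥ i) (Sum.inl 0) = -(i (Sum.inl 1)) := by
  simp [jj, j2, Matrix.mulVec, dotProduct, Matrix.fromBlocks, Fintype.sum_sum_type,
    Fin.sum_univ_two, Fin.sum_univ_three]

private lemma jj_mulVec_inl1 (i : V5) : (jj *ᵥ i) (Sum.inl 1) = i (Sum.inl 0) := by
  simp [jj, j2, Matrix.mulVec, dotProduct, Matrix.fromBlocks, Fintype.sum_sum_type,
    Fin.sum_univ_two, Fin.sum_univ_three]

private lemma jj_mulVec_inr (i : V5) (k : Fin 3) : (jj *ᵥ i) (Sum.inr k) = 0 := by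
  simp [jj, j2, Matrix.mulVec, dotProduct, Matrix.fromBlocks, Fintype.sum_sum_type,
    Fin.sum_univ_two, Fin.sum_univ_three]

/-- The directional derivative of the electrical torque
τ_e(θ,i) = ½ iᵀ(L(θ)𝒿 + 𝒿ᵀL(θ))i along the steady-state flow
(θ̇, i̇) = (ω₀, ω₀ 𝒿 i) vanishes. -/
theorem torque_invariant_along_flow (mc : Machine) (θ : ℝ) (i : V5) (ω0 : ℝ) :
    deriv (fun φ => mc.torque φ i) θ * ω0
      + fderiv ℝ (fun w : V5 => mc.torque θ w) i (ω0 • (jj *ᵥ i)) = 0 := by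
  set s0 := i (Sum.inl 0) with hs0
  set s1 := i (Sum.inl 1) with hs1
  set P := mc.lsf * i (Sum.inr 0) + mc.lsd * i (Sum.inr 1) with hP
  set Q := mc.lsq * i (Sum.inr 2) with hQ
  set a := mc.lsa with ha
  set v := ω0 • (jj *ᵥ i) with hv
  -- the function φ ↦ torque φ i, explicitly
  have hfun : (fun φ => mc.torque φ i) = (fun φ =>
      a * (s0 ^ 2 - s1 ^ 2) * Real.sin (2 * φ)
      - 2 * a * s0 * s1 * Real.cos (2 * φ)
      + (P * s0 - Q * s1) * Real.sin φ
      - (P * s1 + Q * s0) * Real.cos φ) := funext fun φ => torque_eq mc φ i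
  -- derivative in θ
  have h2 : HasDerivAt (fun φ : ℝ => 2 * φ) 2 θ := by
    simpa using (hasDerivAt_id θ).const_mul 2
  have hsin2 : HasDerivAt (fun φ : ℝ => Real.sin (2 * φ)) (Real.cos (2 * θ) * 2) θ := by
    simpa [Function.comp_def] using (Real.hasDerivAt_sin (2 * θ)).comp θ h2
  have hcos2 : HasDerivAt (fun φ : ℝ => Real.cos (2 * φ)) (-Real.sin (2 * θ) * 2) θ := by
    simpa [Function.comp_def] using (Real.hasDerivAt_cos (2 * θ)).comp θ h2
  have hD : HasDerivAt (fun φ => mc.torque φ i)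
      (a * (s0 ^ 2 - s1 ^ 2) * (Real.cos (2 * θ) * 2)
        - 2 * a * s0 * s1 * (-Real.sin (2 * θ) * 2)
        + (P * s0 - Q * s1) * Real.cos θ
        - (P * s1 + Q * s0) * (-Real.sin θ)) θ := by
    rw [hfun]
    exact (((hsin2.const_mul _).sub (hcos2.const_mul _)).add
      ((Real.hasDerivAt_sin θ).const_mul _)).sub ((Real.hasDerivAt_cos θ).const_mul _)
  -- components of v
  have hv0 : v (Sum.inl 0) = ω0 * (-s1) := by
    rw [hv]; simp [jj_mulVec_inl0, hs0, hs1]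
  have hv1 : v (Sum.inl 1) = ω0 * s0 := by
    rw [hv]; simp [jj_mulVec_inl1, hs0, hs1]
  have hvr : ∀ k : Fin 3, v (Sum.inr k) = 0 := by
    intro k; rw [hv]; simp [jj_mulVec_inr]
  -- differentiability in i
  have hgfun : (fun w : V5 => mc.torque θ w) = (fun w : V5 =>
      a * (w (Sum.inl 0) ^ 2 - w (Sum.inl 1) ^ 2) * Real.sin (2 * θ)
      - 2 * a * w (Sum.inl 0) * w (Sum.inl 1) * Real.cos (2 * θ)
      + ((mc.lsf * w (Sum.inr 0) + mc.lsd * w (Sum.inr 1)) * w (Sum.inl 0)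
          - mc.lsq * w (Sum.inr 2) * w (Sum.inl 1)) * Real.sin θ
      - ((mc.lsf * w (Sum.inr 0) + mc.lsd * w (Sum.inr 1)) * w (Sum.inl 1)
          + mc.lsq * w (Sum.inr 2) * w (Sum.inl 0)) * Real.cos θ) :=
    funext fun w => torque_eq mc θ w
  have hdiff : DifferentiableAt ℝ (fun w : V5 => mc.torque θ w) i := by
    rw [hgfun]
    fun_prop
  -- compare fderiv along v with 1-d derivative along the line t ↦ i + t • v
  have hline : HasDerivAt (fun t : ℝ => i + t • v) v 0 := by
    simpa using ((hasDerivAt_id (0 : ℝ)).smul_const v).const_add i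
  have hkey : HasDerivAt (fun t : ℝ => mc.torque θ (i + t • v))
      (fderiv ℝ (fun w : V5 => mc.torque θ w) i v) 0 :=
    hdiff.hasFDerivAt.comp_hasDerivAt_of_eq 0 hline (by simp)
  -- the explicit 1-d polynomial
  have hfun2 : (fun t : ℝ => mc.torque θ (i + t • v)) = (fun t : ℝ =>
      (a * ω0 ^ 2 * (s1 ^ 2 - s0 ^ 2) * Real.sin (2 * θ)
        + 2 * a * ω0 ^ 2 * s0 * s1 * Real.cos (2 * θ)) * t ^ 2
      + (-(4 * a * ω0 * s0 * s1) * Real.sin (2 * θ)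
          - 2 * a * ω0 * (s0 ^ 2 - s1 ^ 2) * Real.cos (2 * θ)
          - ω0 * (P * s1 + Q * s0) * Real.sin θ
          - ω0 * (P * s0 - Q * s1) * Real.cos θ) * t
      + (a * (s0 ^ 2 - s1 ^ 2) * Real.sin (2 * θ)
          - 2 * a * s0 * s1 * Real.cos (2 * θ)
          + (P * s0 - Q * s1) * Real.sin θ
          - (P * s1 + Q * s0) * Real.cos θ)) := by
    funext t
    rw [torque_eq]
    simp only [Pi.add_apply, Pi.smul_apply, smul_eq_mul, hv0, hv1, hvr, hs0, hs1, hP, hQ, ha]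
    ring
  have hpoly : HasDerivAt (fun t : ℝ => mc.torque θ (i + t • v))
      (-(4 * a * ω0 * s0 * s1) * Real.sin (2 * θ)
        - 2 * a * ω0 * (s0 ^ 2 - s1 ^ 2) * Real.cos (2 * θ)
        - ω0 * (P * s1 + Q * s0) * Real.sin θ
        - ω0 * (P * s0 - Q * s1) * Real.cos θ) 0 := by
    rw [hfun2]
    have := (((hasDerivAt_pow 2 (0 : ℝ)).const_mul
        (a * ω0 ^ 2 * (s1 ^ 2 - s0 ^ 2) * Real.sin (2 * θ)
          + 2 * a * ω0 ^ 2 * s0 * s1 * Real.cos (2 * θ))).add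
      ((hasDerivAt_id (0 : ℝ)).const_mul
        (-(4 * a * ω0 * s0 * s1) * Real.sin (2 * θ)
          - 2 * a * ω0 * (s0 ^ 2 - s1 ^ 2) * Real.cos (2 * θ)
          - ω0 * (P * s1 + Q * s0) * Real.sin θ
          - ω0 * (P * s0 - Q * s1) * Real.cos θ))).add_const
      (a * (s0 ^ 2 - s1 ^ 2) * Real.sin (2 * θ)
        - 2 * a * s0 * s1 * Real.cos (2 * θ)
        + (P * s0 - Q * s1) * Real.sin θ
        - (P * s1 + Q * s0) * Real.cos θ)
    simpa using this
  have hfd : fderiv ℝ (fun w : V5 => mc.torque θ w) i v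
      = -(4 * a * ω0 * s0 * s1) * Real.sin (2 * θ)
        - 2 * a * ω0 * (s0 ^ 2 - s1 ^ 2) * Real.cos (2 * θ)
        - ω0 * (P * s1 + Q * s0) * Real.sin θ
        - ω0 * (P * s0 - Q * s1) * Real.cos θ := hkey.unique hpoly
  rw [hD.deriv, hfd]
  ring
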